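/- Fix 0 < β < 1/3. Then there exists a unique κ* > 0 such that μ₀(κ) = κ / ((1 + βκ²) tanh(κ)) satisfies μ₀'(κ*) = 0, and μ₀ is strictly increasing on (0, κ*) and strictly decreasing on (κ*, ∞). -/

import Mathlib

open Real Set

private noncomputable def E0 (u : ℝ) : ℝ := u * sinh u + sinh u ^ 2 - u ^ 2 * cosh u - u ^ 2
private noncomputable def E1 (u : ℝ) : ℝ := sinh u - u * cosh u + 2 * sinh u * cosh u - u ^ 2 * sinh u - 2 * u
private noncomputable def E2 (u : ℝ) : ℝ := 2 * cosh u ^ 2 + 2 * sinh u ^ 2 - 3 * u * sinh u - u ^ 2 * cosh u - 2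
private noncomputable def E3 (u : ℝ) : ℝ := 8 * sinh u * cosh u - 3 * sinh u - 5 * u * cosh u - u ^ 2 * sinh u
private noncomputable def E4 (u : ℝ) : ℝ := 8 * cosh u ^ 2 + 8 * sinh u ^ 2 - 8 * cosh u - 7 * u * sinh u - u ^ 2 * cosh u
private noncomputable def E5 (u : ℝ) : ℝ := 32 * sinh u * cosh u - 15 * sinh u - 9 * u * cosh u - u ^ 2 * sinh u
private noncomputable def E6 (u : ℝ) : ℝ := 32 * cosh u ^ 2 + 32 * sinh u ^ 2 - 24 * cosh u - 11 * u * sinh u - u ^ 2 * cosh u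

private lemma hasDerivAt_E0 (u : ℝ) : HasDerivAt E0 (E1 u) u := by
  have a0 := (hasDerivAt_id u).mul (Real.hasDerivAt_sinh u)
  have a1 := a0.add ((Real.hasDerivAt_sinh u).pow 2)
  have a2 := a1.sub ((hasDerivAt_pow 2 u).mul (Real.hasDerivAt_cosh u))
  have a3 := a2.sub (hasDerivAt_pow 2 u)
  exact a3.congr_deriv (by unfold E1; push_cast; simp only [id_eq, pow_one]; ring)

private lemma hasDerivAt_E1 (u : ℝ) : HasDerivAt E1 (E2 u) u := by
  have a0 := (Real.hasDerivAt_sinh u).sub ((hasDerivAt_id u).mul (Real.hasDerivAt_cosh u))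
  have a1 := a0.add (((Real.hasDerivAt_sinh u).const_mul (2:ℝ)).mul (Real.hasDerivAt_cosh u))
  have a2 := a1.sub ((hasDerivAt_pow 2 u).mul (Real.hasDerivAt_sinh u))
  have a3 := a2.sub ((hasDerivAt_id u).const_mul (2:ℝ))
  exact a3.congr_deriv (by unfold E2; push_cast; simp only [id_eq, pow_one]; ring)

private lemma hasDerivAt_E2 (u : ℝ) : HasDerivAt E2 (E3 u) u := by
  have a0 := ((Real.hasDerivAt_cosh u).pow 2).const_mul (2:ℝ)
  have a1 := a0.add (((Real.hasDerivAt_sinh u).pow 2).const_mul (2:ℝ))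
  have a2 := a1.sub (((hasDerivAt_id u).const_mul (3:ℝ)).mul (Real.hasDerivAt_sinh u))
  have a3 := a2.sub ((hasDerivAt_pow 2 u).mul (Real.hasDerivAt_cosh u))
  have a4 := a3.sub_const ((2:ℝ))
  exact a4.congr_deriv (by unfold E3; push_cast; simp only [id_eq, pow_one]; ring)

private lemma hasDerivAt_E3 (u : ℝ) : HasDerivAt E3 (E4 u) u := by
  have a0 := ((Real.hasDerivAt_sinh u).const_mul (8:ℝ)).mul (Real.hasDerivAt_cosh u)
  have a1 := a0.sub ((Real.hasDerivAt_sinh u).const_mul (3:ℝ))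
  have a2 := a1.sub (((hasDerivAt_id u).const_mul (5:ℝ)).mul (Real.hasDerivAt_cosh u))
  have a3 := a2.sub ((hasDerivAt_pow 2 u).mul (Real.hasDerivAt_sinh u))
  exact a3.congr_deriv (by unfold E4; push_cast; simp only [id_eq, pow_one]; ring)

private lemma hasDerivAt_E4 (u : ℝ) : HasDerivAt E4 (E5 u) u := by
  have a0 := ((Real.hasDerivAt_cosh u).pow 2).const_mul (8:ℝ)
  have a1 := a0.add (((Real.hasDerivAt_sinh u).pow 2).const_mul (8:ℝ))
  have a2 := a1.sub ((Real.hasDerivAt_cosh u).const_mul (8:ℝ))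
  have a3 := a2.sub (((hasDerivAt_id u).const_mul (7:ℝ)).mul (Real.hasDerivAt_sinh u))
  have a4 := a3.sub ((hasDerivAt_pow 2 u).mul (Real.hasDerivAt_cosh u))
  exact a4.congr_deriv (by unfold E5; push_cast; simp only [id_eq, pow_one]; ring)

private lemma hasDerivAt_E5 (u : ℝ) : HasDerivAt E5 (E6 u) u := by
  have a0 := ((Real.hasDerivAt_sinh u).const_mul (32:ℝ)).mul (Real.hasDerivAt_cosh u)
  have a1 := a0.sub ((Real.hasDerivAt_sinh u).const_mul (15:ℝ))
  have a2 := a1.sub (((hasDerivAt_id u).const_mul (9:ℝ)).mul (Real.hasDerivAt_cosh u))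
  have a3 := a2.sub ((hasDerivAt_pow 2 u).mul (Real.hasDerivAt_sinh u))
  exact a3.congr_deriv (by unfold E6; push_cast; simp only [id_eq, pow_one]; ring)
private lemma pos_of_hasDerivAt_pos {f f' : ℝ → ℝ} (hd : ∀ x, HasDerivAt f (f' x) x)
    (h0 : f 0 = 0) (hpos : ∀ x, 0 < x → 0 < f' x) {u : ℝ} (hu : 0 < u) : 0 < f u := by
  have hm : StrictMonoOn f (Set.Ici 0) := by
    apply strictMonoOn_of_deriv_pos (convex_Ici 0)
      (fun x _ => (hd x).continuousAt.continuousWithinAt)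
    intro x hx
    rw [interior_Ici] at hx
    rw [(hd x).deriv]
    exact hpos x hx
  have := hm Set.self_mem_Ici (Set.mem_Ici.2 hu.le) hu
  rwa [h0] at this

private lemma cosh_quad_lb {u : ℝ} (hu : 0 < u) : 1 + u ^ 2 / 2 < cosh u := by
  have h := pos_of_hasDerivAt_pos (f := fun u : ℝ => cosh u - 1 - u ^ 2 / 2)
    (f' := fun u : ℝ => sinh u - u)
    (fun x => by
      have h := ((Real.hasDerivAt_cosh x).sub_const 1).sub ((hasDerivAt_pow 2 x).div_const 2)
      exact h.congr_deriv (by push_cast; ring))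
    (by simp) (fun x hx => by simpa using (Real.self_lt_sinh_iff.2 hx)) hu
  linarith [h]

private lemma E6_pos {u : ℝ} (hu : 0 < u) : 0 < E6 u := by
  have h1 := cosh_quad_lb hu
  have h2 : sinh u ≤ cosh u := by nlinarith [Real.cosh_sub_sinh u, Real.exp_pos (-u)]
  have h3 : 0 < sinh u := Real.sinh_pos_iff.2 hu
  have h4 : 0 < cosh u := Real.cosh_pos u
  unfold E6
  nlinarith [sq_nonneg (sinh u), mul_pos hu h3,
    mul_le_mul_of_nonneg_left h2 (by positivity : (0:ℝ) ≤ 11 * u),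
    mul_le_mul_of_nonneg_left h2 (by positivity : (0:ℝ) ≤ u ^ 2), sq_nonneg u, mul_pos hu hu]

private lemma E0_pos {u : ℝ} (hu : 0 < u) : 0 < E0 u := by
  have h5 : ∀ x : ℝ, 0 < x → 0 < E5 x :=
    fun x hx => pos_of_hasDerivAt_pos hasDerivAt_E5 (by unfold E5; simp) (fun y hy => E6_pos hy) hx
  have h4 : ∀ x : ℝ, 0 < x → 0 < E4 x :=
    fun x hx => pos_of_hasDerivAt_pos hasDerivAt_E4 (by unfold E4; simp) h5 hx
  have h3 : ∀ x : ℝ, 0 < x → 0 < E3 x :=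
    fun x hx => pos_of_hasDerivAt_pos hasDerivAt_E3 (by unfold E3; simp) h4 hx
  have h2 : ∀ x : ℝ, 0 < x → 0 < E2 x :=
    fun x hx => pos_of_hasDerivAt_pos hasDerivAt_E2 (by unfold E2; simp) h3 hx
  have h1 : ∀ x : ℝ, 0 < x → 0 < E1 x :=
    fun x hx => pos_of_hasDerivAt_pos hasDerivAt_E1 (by unfold E1; simp) h2 hx
  exact pos_of_hasDerivAt_pos hasDerivAt_E0 (by unfold E0; simp) h1 hu


private lemma pos_of_hasDerivAt_pos' {f f' : ℝ → ℝ} (hd : ∀ x, HasDerivAt f (f' x) x)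
    (h0 : f 0 = 0) (hpos : ∀ x, 0 < x → 0 < f' x) {u : ℝ} (hu : 0 < u) : 0 < f u := by
  have hm : StrictMonoOn f (Set.Ici 0) := by
    apply strictMonoOn_of_deriv_pos (convex_Ici 0)
      (fun x _ => (hd x).continuousAt.continuousWithinAt)
    intro x hx
    rw [interior_Ici] at hx
    rw [(hd x).deriv]
    exact hpos x hx
  have := hm Set.self_mem_Ici (Set.mem_Ici.2 hu.le) hu
  rwa [h0] at this

private lemma pos_of_hasDerivAt_pos_Icc {b : ℝ} {f f' : ℝ → ℝ} (hd : ∀ x, HasDerivAt f (f' x) x)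
    (h0 : f 0 = 0) (hpos : ∀ x, 0 < x → x < b → 0 < f' x) {u : ℝ} (hu : 0 < u) (hub : u ≤ b) :
    0 < f u := by
  have hm : StrictMonoOn f (Set.Icc 0 b) := by
    apply strictMonoOn_of_deriv_pos (convex_Icc 0 b)
      (fun x _ => (hd x).continuousAt.continuousWithinAt)
    intro x hx
    rw [interior_Icc] at hx
    rw [(hd x).deriv]
    exact hpos x hx.1 hx.2
  have := hm (Set.left_mem_Icc.2 (hu.le.trans hub)) (Set.mem_Icc.2 ⟨hu.le, hub⟩) hu
  rwa [h0] at this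

private lemma cosh_quad_lb' {u : ℝ} (hu : 0 < u) : 1 + u ^ 2 / 2 < cosh u := by
  have h := pos_of_hasDerivAt_pos' (f := fun u : ℝ => cosh u - 1 - u ^ 2 / 2)
    (f' := fun u : ℝ => sinh u - u)
    (fun x => by
      have h := ((Real.hasDerivAt_cosh x).sub_const 1).sub ((hasDerivAt_pow 2 x).div_const 2)
      exact h.congr_deriv (by push_cast; ring))
    (by simp) (fun x hx => by simpa using (Real.self_lt_sinh_iff.2 hx)) hu
  have h' : 0 < cosh u - 1 - u ^ 2 / 2 := h
  linarith

private lemma sinh_cubic_lb {u : ℝ} (hu : 0 < u) : u + u ^ 3 / 6 < sinh u := by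
  have h := pos_of_hasDerivAt_pos' (f := fun u : ℝ => sinh u - u - u ^ 3 / 6)
    (f' := fun u : ℝ => cosh u - 1 - u ^ 2 / 2)
    (fun x => by
      have h := ((Real.hasDerivAt_sinh x).sub (hasDerivAt_id x)).sub ((hasDerivAt_pow 3 x).div_const 6)
      exact h.congr_deriv (by push_cast; ring))
    (by simp) (fun x hx => by linarith [cosh_quad_lb' hx]) hu
  have h' : 0 < sinh u - u - u ^ 3 / 6 := h
  linarith

private lemma sinh_lt_mul_cosh {u : ℝ} (hu : 0 < u) : sinh u < u * cosh u := by
  have h := pos_of_hasDerivAt_pos' (f := fun u : ℝ => u * cosh u - sinh u)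
    (f' := fun u : ℝ => u * sinh u)
    (fun x => by
      have h := ((hasDerivAt_id x).mul (Real.hasDerivAt_cosh x)).sub (Real.hasDerivAt_sinh x)
      exact h.congr_deriv (by simp only [id_eq]; ring))
    (by simp) (fun x hx => mul_pos hx (Real.sinh_pos_iff.2 hx)) hu
  have h' : 0 < u * cosh u - sinh u := h
  linarith

private lemma cosh_lt_65 {t : ℝ} (ht : 0 < t) (ht' : t ≤ 1 / 2) : cosh t < 6 / 5 := by
  have h1 : cosh t ≤ cosh (1 / 2) := by
    rw [Real.cosh_le_cosh]
    rw [abs_of_pos ht, abs_of_pos (by norm_num : (0:ℝ) < 1/2)]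
    exact ht'
  have he : Real.exp (1/2) ^ 2 = Real.exp 1 := by
    rw [sq, ← Real.exp_add]; norm_num
  have hgt := Real.exp_one_gt_d9
  have hlt := Real.exp_one_lt_d9
  have hp := Real.exp_pos (1/2 : ℝ)
  have h2 : Real.exp (1/2) < 1.65 := by nlinarith
  have h3 : Real.exp (1/2) > 1.6 := by nlinarith
  have h4 : Real.exp (-(1/2) : ℝ) = (Real.exp (1/2))⁻¹ := Real.exp_neg _
  have h5 : Real.exp (-(1/2) : ℝ) < 0.625 := by
    rw [h4, inv_lt_comm₀ hp (by norm_num)]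
    norm_num
    linarith
  have h6 : cosh (1/2 : ℝ) = (Real.exp (1/2) + Real.exp (-(1/2):ℝ)) / 2 :=
    Real.cosh_eq _
  calc cosh t ≤ cosh (1/2) := h1
    _ < 6/5 := by rw [h6]; nlinarith

private lemma cosh_cubic_ub {x : ℝ} (hx : 0 < x) (hx1 : x ≤ 1) : cosh x < 1 + 3 / 4 * x ^ 2 := by
  have hd : cosh x = 1 + 2 * sinh (x/2) ^ 2 := by
    have := Real.cosh_two_mul (x/2)
    have h2 := Real.cosh_sq (x/2)
    rw [show 2 * (x/2) = x by ring] at this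
    rw [this, h2]; ring
  have hs : sinh (x/2) < (x/2) * cosh (x/2) := sinh_lt_mul_cosh (by linarith)
  have hc : cosh (x/2) < 6/5 := cosh_lt_65 (by linarith) (by linarith)
  have hsp : 0 < sinh (x/2) := Real.sinh_pos_iff.2 (by linarith)
  have : sinh (x/2) < 3/5 * x := by nlinarith
  rw [hd]; nlinarith

private lemma sinh_cubic_ub {u : ℝ} (hu : 0 < u) (hu1 : u ≤ 1) : sinh u < u + u ^ 3 / 4 := by
  have h := pos_of_hasDerivAt_pos_Icc (b := 1) (f := fun u : ℝ => u + u ^ 3 / 4 - sinh u)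
    (f' := fun u : ℝ => 1 + 3 / 4 * u ^ 2 - cosh u)
    (fun x => by
      have h := ((hasDerivAt_id x).add ((hasDerivAt_pow 3 x).div_const 4)).sub (Real.hasDerivAt_sinh x)
      exact h.congr_deriv (by push_cast; ring))
    (by simp) (fun x hx hx1 => by linarith [cosh_cubic_ub hx hx1.le]) hu hu1
  have h' : 0 < u + u ^ 3 / 4 - sinh u := h
  linarith


private noncomputable def Psi (κ : ℝ) : ℝ :=
  (sinh κ * cosh κ - κ) / (κ ^ 2 * (sinh κ * cosh κ + κ))

private lemma D1_pos {κ : ℝ} (hκ : 0 < κ) : 0 < κ ^ 2 * (sinh κ * cosh κ + κ) := by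
  have h1 : 0 < sinh κ := Real.sinh_pos_iff.2 hκ
  have h2 : 0 < cosh κ := Real.cosh_pos κ
  positivity

private lemma hasDerivAt_Psi {κ : ℝ} (hκ : 0 < κ) :
    HasDerivAt Psi
      ((-(κ * E0 (2 * κ)) / 2) / (κ ^ 2 * (sinh κ * cosh κ + κ)) ^ 2) κ := by
  have hN := ((Real.hasDerivAt_sinh κ).mul (Real.hasDerivAt_cosh κ)).sub (hasDerivAt_id κ)
  have hD := (hasDerivAt_pow 2 κ).mul
    (((Real.hasDerivAt_sinh κ).mul (Real.hasDerivAt_cosh κ)).add (hasDerivAt_id κ))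
  have h := hN.div hD (ne_of_gt (D1_pos hκ))
  exact h.congr_deriv (by
    unfold E0
    rw [Real.sinh_two_mul, Real.cosh_two_mul]
    push_cast
    simp only [Pi.mul_apply, Pi.sub_apply, Pi.add_apply, id_eq, pow_one]
    have hc := Real.cosh_sq κ
    field_simp
    ring_nf)

private lemma psi_deriv_neg {κ : ℝ} (hκ : 0 < κ) (hE : 0 < E0 (2 * κ)) :
    deriv Psi κ < 0 := by
  rw [(hasDerivAt_Psi hκ).deriv]
  apply div_neg_of_neg_of_pos
  · nlinarith
  · have := D1_pos hκ
    positivity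

private lemma strictAntiOn_Psi (hE : ∀ u : ℝ, 0 < u → 0 < E0 u) :
    StrictAntiOn Psi (Set.Ioi 0) := by
  apply strictAntiOn_of_deriv_neg (convex_Ioi 0)
    (fun x hx => (hasDerivAt_Psi hx).continuousAt.continuousWithinAt)
  intro x hx
  rw [interior_Ioi] at hx
  have hx' : (0:ℝ) < x := hx
  exact psi_deriv_neg hx' (hE _ (by linarith))

private lemma Psi_lt_inv_sq {x : ℝ} (hx : 0 < x) : Psi x < 1 / x ^ 2 := by
  have hs := Real.sinh_pos_iff.2 hx
  have hc := Real.cosh_pos x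
  have hD := D1_pos hx
  unfold Psi
  rw [div_lt_div_iff₀ hD (by positivity)]
  nlinarith [pow_pos hx 3, mul_pos hs hc]

private lemma Psi_lb {x : ℝ} (hx : 0 < x) (hx2 : x ≤ 1/2) :
    (2 * x ^ 3 / 3) / (2 * x ^ 3 + x ^ 5) ≤ Psi x := by
  have hsa := Real.sinh_pos_iff.2 hx
  have hca := Real.cosh_pos x
  have hsc2 : sinh x * cosh x = sinh (2 * x) / 2 := by rw [Real.sinh_two_mul]; ring
  have hlb := sinh_cubic_lb (by linarith : (0:ℝ) < 2 * x)
  have hub := sinh_cubic_ub (by linarith : (0:ℝ) < 2 * x) (by linarith)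
  have hN : 2 * x ^ 3 / 3 ≤ sinh x * cosh x - x := by rw [hsc2]; nlinarith
  have hDub : x ^ 2 * (sinh x * cosh x + x) ≤ 2 * x ^ 3 + x ^ 5 := by
    rw [hsc2]; nlinarith [sq_nonneg x, pow_pos hx 2]
  have hDpos := D1_pos hx
  unfold Psi
  exact div_le_div₀ (by nlinarith) hN hDpos hDub

private lemma sinh_pos_of_pos' {x : ℝ} (hx : 0 < x) : 0 < sinh x := Real.sinh_pos_iff.2 hx

theorem stmt_3 (β : ℝ) (hβ0 : 0 < β) (hβ : β < 1 / 3) :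
    ∃ κs : ℝ, 0 < κs ∧
      deriv (fun κ : ℝ => κ / ((1 + β * κ ^ 2) * Real.tanh κ)) κs = 0 ∧
      (∀ κ : ℝ, 0 < κ →
        deriv (fun κ : ℝ => κ / ((1 + β * κ ^ 2) * Real.tanh κ)) κ = 0 → κ = κs) ∧
      StrictMonoOn (fun κ : ℝ => κ / ((1 + β * κ ^ 2) * Real.tanh κ)) (Set.Ioo 0 κs) ∧
      StrictAntiOn (fun κ : ℝ => κ / ((1 + β * κ ^ 2) * Real.tanh κ)) (Set.Ioi κs) := by
  have hE : ∀ u : ℝ, 0 < u → 0 < E0 u := fun u hu => E0_pos hu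
  have hPsiAnti : StrictAntiOn Psi (Set.Ioi 0) := strictAntiOn_Psi hE
  -- rewrite the function
  have hEq : (fun κ : ℝ => κ / ((1 + β * κ ^ 2) * Real.tanh κ))
      = (fun κ : ℝ => κ * cosh κ / ((1 + β * κ ^ 2) * sinh κ)) := by
    funext x
    rcases eq_or_ne (sinh x) 0 with h | h
    · simp [Real.tanh_eq_sinh_div_cosh, h]
    · rw [Real.tanh_eq_sinh_div_cosh]
      have hc := (Real.cosh_pos x).ne'
      field_simp
  have hbpos : ∀ x : ℝ, (0:ℝ) < 1 + β * x ^ 2 := fun x => by nlinarith [sq_nonneg x]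
  -- derivative of the rewritten function
  have key : ∀ κ : ℝ, 0 < κ →
      HasDerivAt (fun κ : ℝ => κ * cosh κ / ((1 + β * κ ^ 2) * sinh κ))
        (((1 - β * κ ^ 2) * (sinh κ * cosh κ) - κ * (1 + β * κ ^ 2))
          / ((1 + β * κ ^ 2) * sinh κ) ^ 2) κ := by
    intro κ hκ
    have hs := sinh_pos_of_pos' hκ
    have hne : ((1:ℝ) + β * κ ^ 2) * sinh κ ≠ 0 := ne_of_gt (mul_pos (hbpos κ) hs)
    have top := (hasDerivAt_id κ).mul (Real.hasDerivAt_cosh κ)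
    have bot := ((hasDerivAt_const κ (1:ℝ)).add ((hasDerivAt_pow 2 κ).const_mul β)).mul
      (Real.hasDerivAt_sinh κ)
    have h := top.div bot hne
    refine h.congr_deriv ?_
    congr 1
    push_cast
    simp only [Pi.mul_apply, Pi.add_apply, id_eq, pow_one]
    linear_combination (-(κ * (1 + β * κ ^ 2))) * Real.cosh_sq κ
  -- relation between the numerator F and Psi
  have hF : ∀ κ : ℝ, 0 < κ →
      (1 - β * κ ^ 2) * (sinh κ * cosh κ) - κ * (1 + β * κ ^ 2)
        = (Psi κ - β) * (κ ^ 2 * (sinh κ * cosh κ + κ)) := by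
    intro κ hκ
    have hD := D1_pos hκ
    unfold Psi
    field_simp
    ring
  -- choose a and b
  set δ : ℝ := (1 - 3 * β) / (3 * β) with hδdef
  have hδpos : 0 < δ := by
    apply div_pos <;> linarith
  set a : ℝ := min (1/2) (Real.sqrt δ) with hadef
  have ha0 : 0 < a := lt_min (by norm_num) (Real.sqrt_pos.2 hδpos)
  have ha12 : a ≤ 1/2 := min_le_left _ _
  have ha2 : a ^ 2 ≤ δ := by
    have h1 : a ≤ Real.sqrt δ := min_le_right _ _
    have := Real.sq_sqrt hδpos.le
    nlinarith [Real.sqrt_nonneg δ]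
  set b : ℝ := Real.sqrt (1/β) + 1 with hbdef
  have hb1 : 1 ≤ b := by
    have := Real.sqrt_nonneg (1/β)
    rw [hbdef]; linarith
  have hab : a ≤ b := by linarith
  -- Psi a > β
  have hPsia : β < Psi a := by
    have hX := Psi_lb ha0 ha12
    have hδ : δ * (3 * β) = 1 - 3 * β := by
      rw [hδdef]; field_simp
    have h3 : 3 * β * a ^ 2 ≤ 1 - 3 * β := by nlinarith [mul_pos hβ0 (pow_pos ha0 2)]
    have h4 : 3 * β * a ^ 2 * a ^ 3 ≤ (1 - 3 * β) * a ^ 3 :=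
      mul_le_mul_of_nonneg_right h3 (pow_pos ha0 3).le
    have hXβ : β < (2 * a ^ 3 / 3) / (2 * a ^ 3 + a ^ 5) := by
      rw [lt_div_iff₀ (by positivity)]
      nlinarith [pow_pos ha0 3]
    linarith
  -- Psi b < β
  have hPsib : Psi b < β := by
    have hb0 : (0:ℝ) < b := by linarith
    have h1 := Psi_lt_inv_sq hb0
    have hsq : Real.sqrt (1/β) ^ 2 = 1/β := Real.sq_sqrt (by positivity)
    have hb2 : 1/β < b ^ 2 := by
      rw [hbdef]
      nlinarith [Real.sqrt_nonneg (1/β)]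
    have h5 : 1 < b ^ 2 * β := (div_lt_iff₀ hβ0).1 hb2
    have h2 : 1 / b ^ 2 < β := by
      rw [div_lt_iff₀ (by positivity)]
      linarith
    linarith
  -- IVT
  have hPsiCont : ContinuousOn Psi (Set.Icc a b) := fun x hx =>
    (hasDerivAt_Psi (lt_of_lt_of_le ha0 hx.1)).continuousAt.continuousWithinAt
  have hIVT := intermediate_value_Icc' hab hPsiCont
  have hβmem : β ∈ Set.Icc (Psi b) (Psi a) := ⟨hPsib.le, hPsia.le⟩
  obtain ⟨κs, hκsmem, hκsval⟩ := hIVT hβmem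
  have hκs0 : 0 < κs := lt_of_lt_of_le ha0 hκsmem.1
  have hκsIoi : κs ∈ Set.Ioi (0:ℝ) := hκs0
  refine ⟨κs, hκs0, ?_, ?_, ?_, ?_⟩
  · -- derivative zero at κs
    rw [hEq, (key κs hκs0).deriv, hF κs hκs0, hκsval]
    simp
  · -- uniqueness
    intro κ hκ hder
    rw [hEq, (key κ hκ).deriv] at hder
    have hs := sinh_pos_of_pos' hκ
    have hden : ((1 + β * κ ^ 2) * sinh κ) ^ 2 ≠ 0 := by positivity
    have hF0 : (1 - β * κ ^ 2) * (sinh κ * cosh κ) - κ * (1 + β * κ ^ 2) = 0 := by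
      field_simp at hder
      rw [mul_zero] at hder
      linarith
    rw [hF κ hκ] at hF0
    have hD := D1_pos hκ
    have hPsiκ : Psi κ = β := by
      rcases mul_eq_zero.1 hF0 with h | h
      · linarith
      · exact absurd h (ne_of_gt hD)
    exact hPsiAnti.injOn hκ hκsIoi (hPsiκ.trans hκsval.symm)
  · -- strict mono on Ioo 0 κs
    rw [hEq]
    apply strictMonoOn_of_deriv_pos (convex_Ioo 0 κs)
      (fun x hx => (key x hx.1).continuousAt.continuousWithinAt)
    intro x hx
    rw [interior_Ioo] at hx
    rw [(key x hx.1).deriv, hF x hx.1]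
    have hs := sinh_pos_of_pos' hx.1
    have hD := D1_pos hx.1
    have hPsix : β < Psi x := by
      have := hPsiAnti (Set.mem_Ioi.2 hx.1) hκsIoi hx.2
      rw [hκsval] at this
      exact this
    apply div_pos (mul_pos (by linarith) hD)
    positivity
  · -- strict anti on Ioi κs
    rw [hEq]
    apply strictAntiOn_of_deriv_neg (convex_Ioi κs)
      (fun x hx => (key x (lt_trans hκs0 hx)).continuousAt.continuousWithinAt)
    intro x hx
    rw [interior_Ioi] at hx
    have hx0 : 0 < x := lt_trans hκs0 hx
    rw [(key x hx0).deriv, hF x hx0]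
    have hs := sinh_pos_of_pos' hx0
    have hD := D1_pos hx0
    have hPsix : Psi x < β := by
      have := hPsiAnti hκsIoi (Set.mem_Ioi.2 hx0) hx
      rw [hκsval] at this
      exact this
    apply div_neg_of_neg_of_pos (mul_neg_of_neg_of_pos (by linarith) hD)
    positivity
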